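/- Let (A, <) be a strict well-order with a strictly monotone system of cofinal sequences s having the Bachmann property. Suppose b < a and p ∈ Path^s_a is a path code with ρ^s_a(p) = b. Then for all natural numbers x ≥ |p| we have F^s_a(x) ≥ F^s_b(x). -/

import Mathlib

/-- `x` is a nonzero limit point of the linear order `A`: it is not the least
element and it is the supremum of the elements strictly below it. -/
def IsLimPt {A : Type*} [LinearOrder A] (x : A) : Prop :=
  (∃ y, y < x) ∧ ∀ y < x, ∃ z, y < z ∧ z < x

/-- `s` is a system of cofinal sequences: at every nonzero limit point `x`,
the values `s x n` are strictly below `x` and their supremum is `x`. -/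
def IsCofSys {A : Type*} [LinearOrder A] (s : A → ℕ → A) : Prop :=
  ∀ x, IsLimPt x → (∀ n : ℕ, s x n < x) ∧ (∀ y < x, ∃ n : ℕ, y < s x n)

/-- The system of cofinal sequences `s` is strictly monotone. -/
def IsStrictMonoCofSys {A : Type*} [LinearOrder A] (s : A → ℕ → A) : Prop :=
  ∀ x, IsLimPt x → ∀ n m : ℕ, n < m → s x n < s x m

/-- The Bachmann property for a system of cofinal sequences `s`. -/
def HasBachmann {A : Type*} [LinearOrder A] (s : A → ℕ → A) : Prop :=
  ∀ x y, IsLimPt x → IsLimPt y → ∀ n : ℕ,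
    s x n < y → y ≤ s x (n + 1) → s x n ≤ s y 0

/-- `PathRho s a p v` means that `p` is a path code from `a` (for the system of
cofinal sequences `s`) and the corresponding path ends at `v`
(i.e. `p ∈ Path^s_a` and `ρ^s_a(p) = v`). -/
inductive PathRho {A : Type*} [LinearOrder A] (s : A → ℕ → A) (a : A) : List ℕ → A → Prop
  | nil : PathRho s a [] a
  | lim (p : List ℕ) (v : A) (m : ℕ) :
      PathRho s a p v → IsLimPt v → 1 ≤ m → PathRho s a (p ++ [m]) (s v (m - 1))
  | succ (p : List ℕ) (v b : A) :
      PathRho s a p v → b ⋖ v → PathRho s a (p ++ [0]) b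

/-- The norm `|p|` of a path code `p = (n_1, …, n_k)` is `n_1 + … + n_k + k`. -/
def pathLen (p : List ℕ) : ℕ := p.sum + p.length

/-- `F` is the fast-growing hierarchy based on the well-order `A` with the
system of cofinal sequences `s`. -/
def IsFGH {A : Type*} [LinearOrder A] (s : A → ℕ → A) (F : A → ℕ → ℕ) : Prop :=
  (∀ a : A, IsMin a → ∀ x : ℕ, F a x = x + 1) ∧
  (∀ a b : A, b ⋖ a → ∀ x : ℕ, F a x = (F b)^[x] x) ∧
  (∀ a : A, IsLimPt a → ∀ x : ℕ, F a x = F (s a x) x)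

/-- The one-step step-down relation: `b` is related to `a` when `a` is the
immediate successor of `b`, or when `a` is a nonzero limit point and `b = s a 0`. -/
def StepDown {A : Type*} [LinearOrder A] (s : A → ℕ → A) (b a : A) : Prop :=
  b ⋖ a ∨ (IsLimPt a ∧ b = s a 0)


section Aux

open Relation

variable {A : Type*} [LinearOrder A] [WellFoundedLT A]

lemma tricho (a : A) : IsMin a ∨ (∃ b, b ⋖ a) ∨ IsLimPt a := by
  by_cases h1 : IsMin a
  · exact Or.inl h1
  · obtain ⟨y, hy, hy2⟩ : ∃ y, y ≤ a ∧ ¬ a ≤ y := by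
      simpa [IsMin, not_forall] using h1
    have hylt : y < a := lt_of_le_not_ge hy hy2
    by_cases h2 : IsLimPt a
    · exact Or.inr (Or.inr h2)
    · right; left
      have : ¬ (∀ z < a, ∃ w, z < w ∧ w < a) := fun h => h2 ⟨⟨y, hylt⟩, h⟩
      push_neg at this
      obtain ⟨z, hz, hz2⟩ := this
      exact ⟨z, hz, fun c hc1 hc2 => absurd (hz2 c hc1) (not_le.mpr hc2)⟩

lemma stepDown_lt {s : A → ℕ → A} (hcof : IsCofSys s) {b a : A}
    (h : StepDown s b a) : b < a := by
  rcases h with h | ⟨hl, he⟩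
  · exact h.lt
  · exact he ▸ (hcof a hl).1 0

lemma chain_le {s : A → ℕ → A} (hcof : IsCofSys s) {b a : A}
    (h : ReflTransGen (StepDown s) b a) : b ≤ a := by
  induction h with
  | refl => exact le_refl _
  | tail h1 h2 ih => exact ih.trans (stepDown_lt hcof h2).le

lemma F_ge_id {s : A → ℕ → A} (hcof : IsCofSys s) {F : A → ℕ → ℕ}
    (hF : IsFGH s F) : ∀ a : A, ∀ x : ℕ, x ≤ F a x := by
  obtain ⟨hFmin, hFsucc, hFlim⟩ := hF
  intro a
  induction a using WellFoundedLT.induction with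
  | _ a IH =>
    intro x
    rcases tricho a with h | ⟨b, hb⟩ | h
    · rw [hFmin a h x]; omega
    · rw [hFsucc a b hb x]
      have hiter : ∀ n y, y ≤ (F b)^[n] y := by
        intro n
        induction n with
        | zero => intro y; simp
        | succ n ih =>
          intro y
          rw [Function.iterate_succ_apply']
          exact (ih y).trans (IH b hb.lt _)
      exact hiter x x
    · rw [hFlim a h x]
      exact IH (s a x) ((hcof a h).1 x) x

lemma bachmann_chain {s : A → ℕ → A} (hcof : IsCofSys s)
    (hbach : HasBachmann s) {x0 : A} (hx0 : IsLimPt x0) (n : ℕ) :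
    ∀ y : A, s x0 n < y → y ≤ s x0 (n + 1) →
      ReflTransGen (StepDown s) (s x0 n) y := by
  intro y
  induction y using WellFoundedLT.induction with
  | _ y IH =>
    intro hlt hle
    rcases tricho y with h | ⟨b, hb⟩ | h
    · exact absurd (h hlt.le) (not_le.mpr hlt)
    · have hble : s x0 n ≤ b := by
        by_contra hc
        exact hb.2 (not_le.mp hc) hlt
      rcases eq_or_lt_of_le hble with he | hl
      · exact ReflTransGen.single (Or.inl (he ▸ hb))
      · exact (IH b hb.lt hl (hb.lt.le.trans hle)).tail (Or.inl hb)
    · have hkey : s x0 n ≤ s y 0 := hbach x0 y hx0 h n hlt hle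
      rcases eq_or_lt_of_le hkey with he | hl
      · exact ReflTransGen.single (Or.inr ⟨h, he⟩)
      · have hs0 : s y 0 < y := (hcof y h).1 0
        exact (IH (s y 0) hs0 hl (hs0.le.trans hle)).tail (Or.inr ⟨h, rfl⟩)

lemma chain_n_m {s : A → ℕ → A} (hcof : IsCofSys s) (hmono : IsStrictMonoCofSys s)
    (hbach : HasBachmann s) {a : A} (ha : IsLimPt a) {n m : ℕ} (hnm : n ≤ m) :
    ReflTransGen (StepDown s) (s a n) (s a m) := by
  induction m with
  | zero =>
    have : n = 0 := Nat.le_zero.mp hnm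
    subst this; exact ReflTransGen.refl
  | succ m ih =>
    rcases Nat.lt_or_ge n (m + 1) with h | h
    · have hchain := ih (Nat.lt_succ_iff.mp h)
      have hseg := bachmann_chain hcof hbach ha m (s a (m + 1))
        (hmono a ha m (m + 1) (Nat.lt_succ_self m)) le_rfl
      exact hchain.trans hseg
    · have : n = m + 1 := le_antisymm hnm h
      subst this; exact ReflTransGen.refl

lemma step_F_le {s : A → ℕ → A} (hcof : IsCofSys s) (hmono : IsStrictMonoCofSys s)
    (hbach : HasBachmann s) {F : A → ℕ → ℕ} (hF : IsFGH s F) :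
    ∀ a b : A, StepDown s b a → ∀ x : ℕ, 1 ≤ x → F b x ≤ F a x := by
  obtain ⟨hFmin, hFsucc, hFlim⟩ := hF
  intro a
  induction a using WellFoundedLT.induction with
  | _ a IH =>
    intro b hstep x hx
    rcases hstep with h | ⟨hl, he⟩
    · rw [hFsucc a b h x]
      obtain ⟨k, rfl⟩ : ∃ k, x = k + 1 := ⟨x - 1, by omega⟩
      rw [Function.iterate_succ_apply]
      have hiter : ∀ n y, y ≤ (F b)^[n] y := by
        intro n
        induction n with
        | zero => intro y; simp
        | succ n ih =>
          intro y
          rw [Function.iterate_succ_apply']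
          exact (ih y).trans (F_ge_id hcof ⟨hFmin, hFsucc, hFlim⟩ b _)
      exact hiter k (F b (k + 1))
    · subst he
      rw [hFlim a hl x]
      have hchain : ReflTransGen (StepDown s) (s a 0) (s a x) :=
        chain_n_m hcof hmono hbach hl (Nat.zero_le x)
      have hbound : s a x < a := (hcof a hl).1 x
      -- chain monotonicity for elements below a
      have key : ∀ c, c < a → ∀ e, ReflTransGen (StepDown s) e c → F e x ≤ F c x := by
        intro c hc e hch
        induction hch using ReflTransGen.head_induction_on with
        | refl => exact le_refl _
        | head h1 h2 ih =>
          have hmle : _ ≤ c := chain_le hcof h2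
          exact (IH _ (lt_of_le_of_lt hmle hc) _ h1 x hx).trans ih
      exact key (s a x) hbound (s a 0) hchain

lemma chain_F_le {s : A → ℕ → A} (hcof : IsCofSys s) (hmono : IsStrictMonoCofSys s)
    (hbach : HasBachmann s) {F : A → ℕ → ℕ} (hF : IsFGH s F)
    {b a : A} (h : ReflTransGen (StepDown s) b a) {x : ℕ} (hx : 1 ≤ x) :
    F b x ≤ F a x := by
  induction h with
  | refl => exact le_refl _
  | tail h1 h2 ih => exact ih.trans (step_F_le hcof hmono hbach hF _ _ h2 x hx)

end Aux

/-- Let `(A, <)` be a strict well-order with a strictly monotone system of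
cofinal sequences `s` having the Bachmann property. Suppose `b < a` and
`p ∈ Path^s_a` with `ρ^s_a(p) = b`. Then for all `x ≥ |p|`, `F^s_a(x) ≥ F^s_b(x)`. -/
theorem coherent_dom {A : Type*} [LinearOrder A] [WellFoundedLT A]
    (s : A → ℕ → A) (hcof : IsCofSys s) (hmono : IsStrictMonoCofSys s)
    (hbach : HasBachmann s)
    (F : A → ℕ → ℕ) (hF : IsFGH s F)
    (a b : A) (hba : b < a) (p : List ℕ) (hp : PathRho s a p b) :
    ∀ x : ℕ, pathLen p ≤ x → F b x ≤ F a x := by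
  clear hba
  induction hp with
  | nil => intro x _; exact le_refl _
  | lim p v m hpv hlim hm IH =>
    intro x hx
    have hlen : pathLen (p ++ [m]) = pathLen p + m + 1 := by
      simp [pathLen]; omega
    rw [hlen] at hx
    have hxm : m ≤ x := by omega
    have hx1 : 1 ≤ x := by omega
    have h1 : F (s v (m - 1)) x ≤ F v x := by
      rw [hF.2.2 v hlim x]
      exact chain_F_le hcof hmono hbach hF
        (chain_n_m hcof hmono hbach hlim (by omega : m - 1 ≤ x)) hx1
    exact h1.trans (IH x (by omega))
  | succ p v b hpv hcov IH =>
    intro x hx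
    have hlen : pathLen (p ++ [0]) = pathLen p + 1 := by
      simp [pathLen]; omega
    rw [hlen] at hx
    have h1 : F b x ≤ F v x :=
      step_F_le hcof hmono hbach hF v b (Or.inl hcov) x (by omega)
    exact h1.trans (IH x (by omega))
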